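/- Let r, t be nonnegative integers and n ≥ r+t+1, and let ρ also denote the automorphism of Z T_{r,t,t} induced by the order-two graph automorphism of T_{r,t,t} exchanging its two legs of length t. Then there is an isomorphism of stable translation quivers Γ^{n+3}_{r,t,t} ≅ Z T_{r,t,t}/⟨τ^{-(n+3)} ρ^{n+3}⟩; in particular the twist by ρ occurs exactly when the polygon has an odd number of sides. -/

import Mathlib

/-!
Coloured oriented single and paired diagonals in a regular polygon, following
L. Lamberti, "Combinatorial model for the cluster categories of type E".

The vertices of the regular `m`-gon `Π` are labelled by `ZMod m` (clockwise).
A coloured oriented diagonal `[i,j]_c` is encoded by the structure `Diag`;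
the colour `P` encodes a *paired* diagonal `[i,j]_P = {[i,j]_R, [j,i]_B}`.
-/

inductive Colour : Type
  | R : Colour
  | B : Colour
  | P : Colour
deriving DecidableEq

/-- A coloured oriented (single or paired) diagonal `[i,j]_c` of the regular
`m`-gon (for `m = 0` we interpret `ZMod 0 = ℤ` as the infinite-sided polygon). -/
structure Diag (m : ℕ) where
  i : ZMod m
  j : ZMod m
  c : Colour
deriving DecidableEq

/-- The simultaneous change of colour and orientation:
`ρ([i,j]_R) = [j,i]_B`, `ρ([i,j]_B) = [j,i]_R`, `ρ([i,j]_P) = [i,j]_P`. -/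
def rho {m : ℕ} : Diag m → Diag m
  | ⟨i, j, Colour.R⟩ => ⟨j, i, Colour.B⟩
  | ⟨i, j, Colour.B⟩ => ⟨j, i, Colour.R⟩
  | ⟨i, j, Colour.P⟩ => ⟨i, j, Colour.P⟩

/-- The anticlockwise rotation `[i,j]_c ↦ [i-1,j-1]_c`. -/
def shiftD {m : ℕ} (d : Diag m) : Diag m := ⟨d.i - 1, d.j - 1, d.c⟩

/-- The slice of `Π_{r,s,t}` based at the vertex `i` of `Π`:
the paired diagonals `[i,i+2]_P, …, [i,i+r+2]_P`, the red single diagonals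
`[i,i+r+3]_R, …, [i,i+r+s+2]_R` and the blue single diagonals
`[i+r+3,i]_B, …, [i+r+t+2,i]_B`. -/
def PiSetAt (r s t : ℕ) {m : ℕ} (i : ZMod m) : Set (Diag m) :=
  {d | (∃ k : ℕ, 2 ≤ k ∧ k ≤ r + 2 ∧ d = ⟨i, i + (k : ZMod m), Colour.P⟩) ∨
       (∃ k : ℕ, r + 3 ≤ k ∧ k ≤ r + s + 2 ∧ d = ⟨i, i + (k : ZMod m), Colour.R⟩) ∨
       (∃ k : ℕ, r + 3 ≤ k ∧ k ≤ r + t + 2 ∧ d = ⟨i + (k : ZMod m), i, Colour.B⟩)}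

/-- The set `Π_{r,s,t}` of coloured oriented single and paired diagonals of the
regular `m`-gon associated to the tree `T_{r,s,t}`. -/
def PiSet (r s t m : ℕ) : Set (Diag m) := ⋃ i : ZMod m, PiSetAt r s t i

open Classical in
/-- The translation `τ` on coloured oriented diagonals: the anticlockwise
rotation `[i,j]_c ↦ [i-1,j-1]_c`, composed with `ρ^{m}` on the first slice
`Π_{r,s,t}|_1` when the tree is symmetric (`s = t`). -/
noncomputable def tauD (r s t : ℕ) {m : ℕ} (d : Diag m) : Diag m :=
  if s = t ∧ d ∈ PiSetAt r s t (1 : ZMod m) then rho^[m] (shiftD d) else shiftD d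

/-- Minimal clockwise rotations (before the colour adjustment at the seam):
`[k,l]_c → [k,l+1]_c`, `[k,l]_c → [k+1,l]_c`, together with
`[k,k+r+2]_P → [k,k+r+3]_R`, `[k,k+r+2]_P → [k+r+3,k]_B`,
`[k,k+r+3]_R → [k+1,k+r+3]_P` and `[k+r+3,k]_B → [k+1,k+r+3]_P`. -/
def Rot (r : ℕ) {m : ℕ} (a b : Diag m) : Prop :=
  b = ⟨a.i, a.j + 1, a.c⟩ ∨ b = ⟨a.i + 1, a.j, a.c⟩ ∨
  (∃ k : ZMod m, a = ⟨k, k + ((r : ZMod m) + 2), Colour.P⟩ ∧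
    (b = ⟨k, k + ((r : ZMod m) + 3), Colour.R⟩ ∨
     b = ⟨k + ((r : ZMod m) + 3), k, Colour.B⟩)) ∨
  (∃ k : ZMod m,
    (a = ⟨k, k + ((r : ZMod m) + 3), Colour.R⟩ ∨
     a = ⟨k + ((r : ZMod m) + 3), k, Colour.B⟩) ∧
    b = ⟨k + 1, k + ((r : ZMod m) + 3), Colour.P⟩)

/-- In the symmetric case `s = t` with an odd-sided polygon, the arrows whose
source lies in `τ(Π_{r,t,t}|_1)` and whose (unadjusted) target lies in the
first slice `Π_{r,t,t}|_1` additionally change colour and orientation. -/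
def SeamTwist (r s t m : ℕ) (a b₀ : Diag m) : Prop :=
  s = t ∧ Odd m ∧ a ∈ (tauD r s t) '' (PiSetAt r s t (1 : ZMod m)) ∧
    b₀ ∈ PiSetAt r s t (1 : ZMod m)

/-- The arrows of the quiver `Γ^{m}_{r,s,t}`: minimal clockwise rotations
between elements of `Π_{r,s,t}`, adjusted by `ρ` at the seam. -/
def ArrowD (r s t m : ℕ) (a b : Diag m) : Prop :=
  a ∈ PiSet r s t m ∧ b ∈ PiSet r s t m ∧
    ∃ b₀, Rot r a b₀ ∧
      ((SeamTwist r s t m a b₀ ∧ b = rho b₀) ∨ (¬ SeamTwist r s t m a b₀ ∧ b = b₀))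

/-- The vertices of the tree `T_{r,s,t}`: a central vertex together with three
legs having `r`, `s`, `t` vertices respectively. -/
inductive TVert (r s t : ℕ) : Type
  | center : TVert r s t
  | legA : Fin r → TVert r s t
  | legB : Fin s → TVert r s t
  | legC : Fin t → TVert r s t
deriving DecidableEq

/-- An orientation of the tree `T_{r,s,t}`: the `A`-leg points towards the
centre, the `B`- and `C`-legs point away from it. -/
def TArrow {r s t : ℕ} (x y : TVert r s t) : Prop :=
  (∃ k l : Fin r, (l : ℕ) + 1 = (k : ℕ) ∧ x = TVert.legA k ∧ y = TVert.legA l) ∨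
  (∃ k : Fin r, (k : ℕ) = 0 ∧ x = TVert.legA k ∧ y = TVert.center) ∨
  (∃ k : Fin s, (k : ℕ) = 0 ∧ x = TVert.center ∧ y = TVert.legB k) ∨
  (∃ k l : Fin s, (k : ℕ) + 1 = (l : ℕ) ∧ x = TVert.legB k ∧ y = TVert.legB l) ∨
  (∃ k : Fin t, (k : ℕ) = 0 ∧ x = TVert.center ∧ y = TVert.legC k) ∨
  (∃ k l : Fin t, (k : ℕ) + 1 = (l : ℕ) ∧ x = TVert.legC k ∧ y = TVert.legC l)

/-- The order-two graph automorphism of a symmetric tree `T_{r,t,t}`,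
exchanging its two legs of length `t`. -/
def treeRho {r t : ℕ} : TVert r t t → TVert r t t
  | TVert.center => TVert.center
  | TVert.legA k => TVert.legA k
  | TVert.legB k => TVert.legC k
  | TVert.legC k => TVert.legB k

/-- `treeRho` as a permutation. -/
def treeRhoPerm (r t : ℕ) : Equiv.Perm (TVert r t t) :=
  Function.Involutive.toPerm treeRho (by intro x; cases x <;> rfl)

/-- The translation of the repetitive quiver `ℤQ`: `τ(m,i) = (m-1,i)`. -/
def ZTau {V : Type} (x : ℤ × V) : ℤ × V := (x.1 - 1, x.2)

/-- The arrows of the repetitive quiver `ℤQ` of a quiver with arrow relation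
`A`: for each arrow `i → j` of `Q` there are arrows `(m,i) → (m,j)` and
`(m,j) → (m+1,i)`. -/
def ZArrow {V : Type} (A : V → V → Prop) (x y : ℤ × V) : Prop :=
  (y.1 = x.1 ∧ A x.2 y.2) ∨ (y.1 = x.1 + 1 ∧ A y.2 x.2)

/-- The automorphism `τ^{-m} σ` of `ℤQ` given by shifting `m` steps to the
right and applying the graph automorphism `σ` of `Q`. -/
def shiftPerm {V : Type} (m : ℕ) (σ : Equiv.Perm V) : Equiv.Perm (ℤ × V) :=
  (Equiv.addRight (m : ℤ)).prodCongr σ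

/-- `φ` exhibits the quiver `Γ^{m}_{r,s,t}` (with vertex set `PiSet r s t m`,
arrow relation `ArrowD` and translation `tauD`) as the quotient of the
repetitive quiver `ℤQ` (with arrow relation `ZArrow A` and translation `ZTau`)
by the cyclic group generated by the automorphism `g`, as stable translation
quivers: `φ` is surjective onto the vertex set, its fibres are exactly the
`g`-orbits, it commutes with the translations, and the arrows of
`Γ^{m}_{r,s,t}` correspond exactly to the `g`-orbits of arrows of `ℤQ`. -/
def IsQuotientIso (r s t m : ℕ) {V : Type} (A : V → V → Prop)
    (g : Equiv.Perm (ℤ × V)) (φ : ℤ × V → Diag m) : Prop :=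
  (∀ x, φ x ∈ PiSet r s t m) ∧
  (∀ d ∈ PiSet r s t m, ∃ x, φ x = d) ∧
  (∀ x y, φ x = φ y ↔ ∃ k : ℤ, (g ^ k) x = y) ∧
  (∀ x, φ (ZTau x) = tauD r s t (φ x)) ∧
  (∀ x y, ArrowD r s t m (φ x) (φ y) ↔
    ∃ y', (∃ k : ℤ, (g ^ k) y = y') ∧ ZArrow A x y')

namespace GammaAux

/-- The slice embedding of the tree into the diagonals based at vertex `i`. -/
def emb (r t : ℕ) {m : ℕ} (i : ZMod m) : TVert r t t → Diag m
  | .center => ⟨i, i + ((r + 2 : ℕ) : ZMod m), Colour.P⟩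
  | .legA a => ⟨i, i + ((r + 1 - (a : ℕ) : ℕ) : ZMod m), Colour.P⟩
  | .legB b => ⟨i, i + ((r + 3 + (b : ℕ) : ℕ) : ZMod m), Colour.R⟩
  | .legC c => ⟨i + ((r + 3 + (c : ℕ) : ℕ) : ZMod m), i, Colour.B⟩

variable {r t m : ℕ}

lemma cast_inj_of_lt {a b : ℕ} (ha : a < m) (hb : b < m)
    (h : (a : ZMod m) = b) : a = b := by
  have := congrArg ZMod.val h
  rwa [ZMod.val_cast_of_lt ha, ZMod.val_cast_of_lt hb] at this

lemma add_cast_inj {i : ZMod m} {a b : ℕ} (ha : a < m) (hb : b < m)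
    (h : i + (a : ZMod m) = i + b) : a = b :=
  cast_inj_of_lt ha hb (by exact add_left_cancel h)

lemma emb_mem (i : ZMod m) (v : TVert r t t) :
    emb r t i v ∈ PiSetAt r t t i := by
  cases v with
  | center => exact Or.inl ⟨r + 2, by omega, by omega, rfl⟩
  | legA a => exact Or.inl ⟨r + 1 - (a : ℕ), by have := a.isLt; omega,
      by have := a.isLt; omega, rfl⟩
  | legB b => exact Or.inr (Or.inl ⟨r + 3 + (b : ℕ), by omega,
      by have := b.isLt; omega, rfl⟩)
  | legC c => exact Or.inr (Or.inr ⟨r + 3 + (c : ℕ), by omega,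
      by have := c.isLt; omega, rfl⟩)

lemma mem_PiSetAt_iff {d : Diag m} {i : ZMod m} :
    d ∈ PiSetAt r t t i ↔ ∃ v : TVert r t t, d = emb r t i v := by
  constructor
  · rintro (⟨k, hk2, hkr, rfl⟩ | ⟨k, hk2, hkr, rfl⟩ | ⟨k, hk2, hkr, rfl⟩)
    · rcases eq_or_ne k (r + 2) with hke | hke
      · exact ⟨.center, by subst hke; rfl⟩
      · refine ⟨.legA ⟨r + 1 - k, by omega⟩, ?_⟩
        show _ = (⟨i, i + ((r + 1 - (r + 1 - k) : ℕ) : ZMod m), Colour.P⟩ : Diag m)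
        rw [show r + 1 - (r + 1 - k) = k from by omega]
    · refine ⟨.legB ⟨k - (r + 3), by omega⟩, ?_⟩
      show _ = (⟨i, i + ((r + 3 + (k - (r + 3)) : ℕ) : ZMod m), Colour.R⟩ : Diag m)
      rw [show r + 3 + (k - (r + 3)) = k from by omega]
    · refine ⟨.legC ⟨k - (r + 3), by omega⟩, ?_⟩
      show _ = (⟨i + ((r + 3 + (k - (r + 3)) : ℕ) : ZMod m), i, Colour.B⟩ : Diag m)
      rw [show r + 3 + (k - (r + 3)) = k from by omega]
  · rintro ⟨v, rfl⟩; exact emb_mem i v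

lemma emb_inj (hm : r + t + 3 < m) {i i' : ZMod m} {v v' : TVert r t t}
    (h : emb r t i v = emb r t i' v') : i = i' ∧ v = v' := by
  have hr2 : r + 2 < m := by omega
  cases v <;> cases v' <;>
    simp only [emb, Diag.mk.injEq] at h <;>
    first | (exact (Colour.noConfusion h.2.2)) | skip
  case center.center => exact ⟨h.1, rfl⟩
  case center.legA a =>
    obtain ⟨rfl, h2, -⟩ := h
    have := add_cast_inj (a := r + 2) (b := r + 1 - (a : ℕ)) hr2 (by omega) h2
    have := a.isLt; omega
  case legA.center a =>
    obtain ⟨rfl, h2, -⟩ := h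
    have := add_cast_inj (a := r + 1 - (a : ℕ)) (b := r + 2) (by omega) hr2 h2
    have := a.isLt; omega
  case legA.legA a a' =>
    obtain ⟨rfl, h2, -⟩ := h
    have := add_cast_inj (a := r + 1 - (a : ℕ)) (b := r + 1 - (a' : ℕ))
      (by omega) (by omega) h2
    have h3 : (a : ℕ) = (a' : ℕ) := by have := a.isLt; have := a'.isLt; omega
    exact ⟨rfl, by congr 1; exact Fin.ext h3⟩
  case legB.legB b b' =>
    obtain ⟨rfl, h2, -⟩ := h
    have := add_cast_inj (a := r + 3 + (b : ℕ)) (b := r + 3 + (b' : ℕ))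
      (by have := b.isLt; omega) (by have := b'.isLt; omega) h2
    exact ⟨rfl, by congr 1; exact Fin.ext (by omega)⟩
  case legC.legC c c' =>
    obtain ⟨h2, rfl, -⟩ := h
    have := add_cast_inj (a := r + 3 + (c : ℕ)) (b := r + 3 + (c' : ℕ))
      (by have := c.isLt; omega) (by have := c'.isLt; omega) h2
    exact ⟨rfl, by congr 1; exact Fin.ext (by omega)⟩

lemma emb_mem_PiSet (i : ZMod m) (v : TVert r t t) :
    emb r t i v ∈ PiSet r t t m :=
  Set.mem_iUnion.2 ⟨i, emb_mem i v⟩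

lemma mem_PiSet_iff {d : Diag m} :
    d ∈ PiSet r t t m ↔ ∃ (i : ZMod m) (v : TVert r t t), d = emb r t i v := by
  constructor
  · intro h
    obtain ⟨i, hi⟩ := Set.mem_iUnion.1 h
    obtain ⟨v, hv⟩ := mem_PiSetAt_iff.1 hi
    exact ⟨i, v, hv⟩
  · rintro ⟨i, v, rfl⟩; exact emb_mem_PiSet i v

lemma rho_emb (i : ZMod m) (v : TVert r t t) :
    rho (emb r t i v) = emb r t i (treeRho v) := by
  cases v <;> rfl

lemma treeRhoPerm_apply (v : TVert r t t) : treeRhoPerm r t v = treeRho v := rfl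

lemma treeRho_invol (u : TVert r t t) : treeRho (treeRho u) = u := by
  cases u <;> rfl

lemma rho_iter_emb (j : ℕ) (i : ZMod m) (v : TVert r t t) :
    rho^[j] (emb r t i v) = emb r t i (((treeRhoPerm r t) ^ j) v) := by
  induction j with
  | zero => rfl
  | succ k ih =>
      rw [Function.iterate_succ_apply', ih, rho_emb, pow_succ']
      rfl

lemma shiftD_emb (i : ZMod m) (v : TVert r t t) :
    shiftD (emb r t i v) = emb r t (i - 1) v := by
  cases v <;> simp only [shiftD, emb, Diag.mk.injEq, true_and, and_true] <;>
    ring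

lemma emb_mem_PiSetAt_iff (hm : r + t + 3 < m) {i i' : ZMod m}
    {v : TVert r t t} : emb r t i v ∈ PiSetAt r t t i' ↔ i = i' := by
  constructor
  · intro h
    obtain ⟨v', hv'⟩ := mem_PiSetAt_iff.1 h
    exact (emb_inj hm hv').1
  · rintro rfl; exact emb_mem i v

lemma tauD_emb (hm : r + t + 3 < m) (i : ZMod m) (v : TVert r t t) :
    tauD r t t (emb r t i v) =
      if i = 1 then emb r t (i - 1) (((treeRhoPerm r t) ^ m) v)
      else emb r t (i - 1) v := by
  by_cases hi : i = 1
  · rw [if_pos hi, tauD, if_pos ⟨rfl, (emb_mem_PiSetAt_iff hm).2 hi⟩,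
      shiftD_emb, rho_iter_emb]
  · rw [if_neg hi, tauD, if_neg, shiftD_emb]
    rintro ⟨-, hmem⟩
    exact hi ((emb_mem_PiSetAt_iff hm).1 hmem)

lemma g_sq : treeRhoPerm r t * treeRhoPerm r t = 1 := by
  ext x
  cases x <;> rfl

lemma g_zpow_congr {j k : ℤ} (h : (2 : ℤ) ∣ j - k) :
    (treeRhoPerm r t) ^ j = (treeRhoPerm r t) ^ k := by
  obtain ⟨c, hc⟩ := h
  have hj : j = k + 2 * c := by omega
  have h2 : (treeRhoPerm r t) ^ (2 : ℤ) = 1 := by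
    rw [zpow_two, g_sq]
  rw [hj, zpow_add, zpow_mul, h2, one_zpow, mul_one]

lemma g_cases (k : ℤ) :
    (treeRhoPerm r t) ^ k = 1 ∨ (treeRhoPerm r t) ^ k = treeRhoPerm r t := by
  rcases Int.even_or_odd k with ⟨c, hc⟩ | ⟨c, hc⟩
  · left
    rw [g_zpow_congr (j := k) (k := 0) ⟨c, by omega⟩, zpow_zero]
  · right
    rw [g_zpow_congr (j := k) (k := 1) ⟨c, by omega⟩, zpow_one]

lemma tArrow_rho {u v : TVert r t t} (h : TArrow u v) :
    TArrow (treeRho u) (treeRho v) := by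
  rcases h with ⟨k, l, hkl, rfl, rfl⟩ | ⟨k, hk, rfl, rfl⟩ | ⟨k, hk, rfl, rfl⟩ |
    ⟨k, l, hkl, rfl, rfl⟩ | ⟨k, hk, rfl, rfl⟩ | ⟨k, l, hkl, rfl, rfl⟩
  · exact Or.inl ⟨k, l, hkl, rfl, rfl⟩
  · exact Or.inr (Or.inl ⟨k, hk, rfl, rfl⟩)
  · exact Or.inr (Or.inr (Or.inr (Or.inr (Or.inl ⟨k, hk, rfl, rfl⟩))))
  · exact Or.inr (Or.inr (Or.inr (Or.inr (Or.inr ⟨k, l, hkl, rfl, rfl⟩))))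
  · exact Or.inr (Or.inr (Or.inl ⟨k, hk, rfl, rfl⟩))
  · exact Or.inr (Or.inr (Or.inr (Or.inl ⟨k, l, hkl, rfl, rfl⟩)))

lemma tArrow_rho_iff {u v : TVert r t t} :
    TArrow (treeRho u) (treeRho v) ↔ TArrow u v := by
  constructor
  · intro h
    have := tArrow_rho h
    rwa [treeRho_invol, treeRho_invol] at this
  · exact tArrow_rho

lemma tArrow_zpow_iff (k : ℤ) {u v : TVert r t t} :
    TArrow (((treeRhoPerm r t) ^ k) u) (((treeRhoPerm r t) ^ k) v) ↔
      TArrow u v := by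
  rcases g_cases (r := r) (t := t) k with h | h <;> rw [h]
  · simp
  · rw [treeRhoPerm_apply, treeRhoPerm_apply, tArrow_rho_iff]

/-! Integer division lemmas. -/

lemma ediv_pred_of_dvd {b a : ℤ} (hb : 0 < b) (h : b ∣ a) :
    (a - 1) / b = a / b - 1 := by
  obtain ⟨q, rfl⟩ := h
  have h1 : (b * q - 1) = (b - 1) + (q - 1) * b := by ring
  have h2 : b * q = 0 + q * b := by ring
  rw [h1, h2, Int.add_mul_ediv_right _ _ hb.ne', Int.add_mul_ediv_right _ _ hb.ne',
    Int.ediv_eq_zero_of_lt (by omega) (by omega),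
    Int.ediv_eq_zero_of_lt (by omega) (by omega)]
  ring

lemma ediv_pred_of_not_dvd {b a : ℤ} (hb : 0 < b) (h : ¬ b ∣ a) :
    (a - 1) / b = a / b := by
  have hmod : a % b ≠ 0 := fun hc => h (Int.dvd_of_emod_eq_zero hc)
  have h0 : 0 ≤ a % b := Int.emod_nonneg a hb.ne'
  have h1 : a % b < b := Int.emod_lt_of_pos a hb
  have key : a = (a / b) * b + a % b := by
    rw [mul_comm]; exact (Int.mul_ediv_add_emod a b).symm
  have h2 : a - 1 = (a % b - 1) + (a / b) * b := by omega
  rw [h2, Int.add_mul_ediv_right _ _ hb.ne',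
    Int.ediv_eq_zero_of_lt (by omega) (by omega), zero_add]

/-- The exponent-counting function: the number of seam crossings. -/
def ee (m : ℕ) (z : ℤ) : ℤ := -((z - 1) / (m : ℤ))

lemma ee_pred_of_dvd (hm : 0 < m) {z : ℤ} (h : (m : ℤ) ∣ z - 1) :
    ee m (z - 1) = ee m z + 1 := by
  have : (z - 1 - 1) / (m : ℤ) = (z - 1) / (m : ℤ) - 1 :=
    ediv_pred_of_dvd (by exact_mod_cast hm) h
  simp only [ee]
  omega

lemma ee_pred_of_not_dvd (hm : 0 < m) {z : ℤ} (h : ¬ (m : ℤ) ∣ z - 1) :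
    ee m (z - 1) = ee m z := by
  have : (z - 1 - 1) / (m : ℤ) = (z - 1) / (m : ℤ) :=
    ediv_pred_of_not_dvd (by exact_mod_cast hm) h
  simp only [ee]
  omega

lemma ee_add_mul (hm : 0 < m) (z k : ℤ) : ee m (z + k * m) = ee m z - k := by
  have : z + k * (m : ℤ) - 1 = (z - 1) + k * m := by ring
  simp only [ee, this, Int.add_mul_ediv_right _ _
    (by exact_mod_cast hm.ne' : (m : ℤ) ≠ 0)]
  ring

/-- The quotient map from the repetitive quiver to the diagonal model. -/
def phiMap (r t m : ℕ) (x : ℤ × TVert r t t) : Diag m :=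
  emb r t ((x.1 : ZMod m)) (((treeRhoPerm r t) ^ ((m : ℤ) * ee m x.1)) x.2)

lemma shiftPerm_zpow_apply {V : Type} (σ : Equiv.Perm V) (k : ℤ) (x : ℤ × V) :
    ((shiftPerm m σ) ^ k) x = (x.1 + k * m, (σ ^ k) x.2) := by
  induction k using Int.induction_on with
  | zero => simp
  | succ n ih =>
      have h1 : (shiftPerm m σ) ^ ((n : ℤ) + 1)
          = (shiftPerm m σ) * (shiftPerm m σ) ^ (n : ℤ) := by
        rw [← zpow_one_add]; congr 1; ring
      have h2 : σ ^ ((n : ℤ) + 1) = σ * σ ^ (n : ℤ) := by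
        rw [← zpow_one_add]; congr 1; ring
      rw [h1, Equiv.Perm.mul_apply, ih, h2]
      simp only [shiftPerm, Equiv.prodCongr_apply, Equiv.coe_addRight, Prod.map,
        Equiv.Perm.mul_apply]
      exact Prod.ext (by ring) rfl
  | pred n ih =>
      have h1 : (shiftPerm m σ) ^ (-(n : ℤ) - 1)
          = (shiftPerm m σ)⁻¹ * (shiftPerm m σ) ^ (-(n : ℤ)) := by
        rw [← zpow_neg_one, ← zpow_add]; congr 1; ring
      have h2 : σ ^ (-(n : ℤ) - 1) = σ⁻¹ * σ ^ (-(n : ℤ)) := by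
        rw [← zpow_neg_one, ← zpow_add]; congr 1; ring
      rw [h1, Equiv.Perm.mul_apply, ih, h2]
      have h3 : ∀ y : ℤ × V, ((shiftPerm m σ)⁻¹ y) = (y.1 - m, σ⁻¹ y.2) := by
        intro y; rfl
      rw [h3]
      exact Prod.ext (by ring) rfl

lemma intCast_eq_iff_dvd (z z' : ℤ) :
    ((z : ZMod m) = (z' : ZMod m)) ↔ (m : ℤ) ∣ z' - z := by
  rw [ZMod.intCast_eq_intCast_iff, Int.ModEq]
  constructor
  · intro h; exact Int.ModEq.dvd h
  · intro h; exact (Int.modEq_iff_dvd.2 h)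

lemma phi_tau (hm : r + t + 3 < m) (x : ℤ × TVert r t t) :
    phiMap r t m (ZTau x) = tauD r t t (phiMap r t m x) := by
  obtain ⟨z, v⟩ := x
  have hm0 : 0 < m := by omega
  have hcast : ((z - 1 : ℤ) : ZMod m) = (z : ZMod m) - 1 := by push_cast; ring
  show emb r t ((z - 1 : ℤ) : ZMod m)
      (((treeRhoPerm r t) ^ ((m : ℤ) * ee m (z - 1))) v)
    = tauD r t t (emb r t ((z : ℤ) : ZMod m)
      (((treeRhoPerm r t) ^ ((m : ℤ) * ee m z)) v))
  rw [tauD_emb hm, hcast]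
  by_cases hz : (m : ℤ) ∣ z - 1
  · have hi : (z : ZMod m) = 1 := by
      have h0 : ((z - 1 : ℤ) : ZMod m) = 0 :=
        (ZMod.intCast_zmod_eq_zero_iff_dvd _ m).2 hz
      rw [hcast] at h0
      rw [sub_eq_zero] at h0
      exact h0
    rw [if_pos hi, ee_pred_of_dvd hm0 hz]
    congr 1
    rw [← zpow_natCast (treeRhoPerm r t) m, ← Equiv.Perm.mul_apply, ← zpow_add]
    congr 1
    ring
  · have hi : (z : ZMod m) ≠ 1 := by
      intro hc
      apply hz
      have : ((z - 1 : ℤ) : ZMod m) = 0 := by rw [hcast, hc, sub_self]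
      exact (ZMod.intCast_zmod_eq_zero_iff_dvd _ m).1 this
    rw [if_neg hi, ee_pred_of_not_dvd hm0 hz]

lemma phi_fibre (hm : r + t + 3 < m) (x y : ℤ × TVert r t t) :
    phiMap r t m x = phiMap r t m y ↔
      ∃ k : ℤ, ((shiftPerm m ((treeRhoPerm r t) ^ m)) ^ k) x = y := by
  obtain ⟨z, v⟩ := x
  obtain ⟨z', v'⟩ := y
  have hm0 : 0 < m := by omega
  have gmk : ∀ k : ℤ, (((treeRhoPerm r t) ^ m) ^ k) = (treeRhoPerm r t) ^ ((m : ℤ) * k) := by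
    intro k
    rw [← zpow_natCast (treeRhoPerm r t) m, ← zpow_mul]
  constructor
  · intro h
    obtain ⟨h1, h2⟩ := emb_inj hm h
    obtain ⟨k, hk⟩ := (intCast_eq_iff_dvd (m := m) z z').1 h1
    refine ⟨k, ?_⟩
    rw [shiftPerm_zpow_apply]
    have hz' : z' = z + k * (m : ℤ) := by rw [mul_comm] at hk; omega
    have hee : ee m z' = ee m z - k := by rw [hz', ee_add_mul hm0]
    refine Prod.ext (by show z + k * (m : ℤ) = z'; omega) ?_
    show (((treeRhoPerm r t) ^ m) ^ k) v = v'
    rw [gmk]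
    have h2' : ((treeRhoPerm r t) ^ ((m : ℤ) * ee m z)) v
        = ((treeRhoPerm r t) ^ ((m : ℤ) * (ee m z - k))) v' := by
      rw [← hee]; exact h2
    have := congrArg (((treeRhoPerm r t) ^ (-((m : ℤ) * (ee m z - k)))) ·) h2'
    simp only [← Equiv.Perm.mul_apply, ← zpow_add] at this
    rw [show -((m : ℤ) * (ee m z - k)) + (m : ℤ) * ee m z = (m : ℤ) * k from by ring,
      neg_add_cancel, zpow_zero] at this
    simpa using this
  · rintro ⟨k, hk⟩
    rw [shiftPerm_zpow_apply] at hk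
    obtain ⟨hk1, hk2⟩ := Prod.mk.injEq .. ▸ hk
    simp only at hk1 hk2
    subst hk1
    rw [phiMap, phiMap]
    have hi : ((z + k * (m : ℤ) : ℤ) : ZMod m) = (z : ZMod m) := by
      push_cast
      simp [ZMod.natCast_self]
    show _ = emb r t ((z + k * (m : ℤ) : ℤ) : ZMod m) _
    rw [hi]
    congr 1
    rw [ee_add_mul hm0, ← hk2, gmk, ← Equiv.Perm.mul_apply, ← zpow_add]
    congr 2
    ring

lemma phi_surj (hm : r + t + 3 < m) (d : Diag m) (hd : d ∈ PiSet r t t m) :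
    ∃ x : ℤ × TVert r t t, phiMap r t m x = d := by
  have hm0 : 0 < m := by omega
  haveI : NeZero m := ⟨by omega⟩
  obtain ⟨i, v, rfl⟩ := mem_PiSet_iff.1 hd
  set z : ℤ := (i.val : ℤ) with hz
  have hiz : ((z : ℤ) : ZMod m) = i := by
    rw [hz]
    push_cast
    simp [ZMod.natCast_val, ZMod.cast_id]
  refine ⟨⟨z, ((treeRhoPerm r t) ^ (-((m : ℤ) * ee m z))) v⟩, ?_⟩
  rw [phiMap]
  show emb r t ((z : ℤ) : ZMod m) _ = _
  rw [hiz]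
  congr 1
  rw [← Equiv.Perm.mul_apply, ← zpow_add, add_neg_cancel, zpow_zero]
  rfl

lemma add_cast_succ_inj {i : ZMod m} {a b : ℕ} (ha : a < m) (hb : b + 1 < m)
    (h : i + (a : ZMod m) = i + (b : ZMod m) + 1) : a = b + 1 := by
  refine add_cast_inj (i := i) ha hb ?_
  rw [h]
  push_cast
  ring

lemma rot_emb_iff (hm : r + t + 3 < m) {i j : ZMod m} {v w : TVert r t t} :
    Rot r (emb r t i v) (emb r t j w) ↔
      (j = i ∧ TArrow v w) ∨ (j = i + 1 ∧ TArrow w v) := by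
  constructor
  · intro h
    have hc2 : ((r + 2 : ℕ) : ZMod m) = (r : ZMod m) + 2 := by push_cast; ring
    have hc3 : ((r + 3 : ℕ) : ZMod m) = (r : ZMod m) + 3 := by push_cast; ring
    rcases h with h | h | ⟨k, ha, hb0⟩ | ⟨k, ha, hb0⟩
    -- Case 1 : b₀ = ⟨a.i, a.j + 1, a.c⟩
    · cases v <;> cases w <;> simp only [emb, Diag.mk.injEq] at h <;>
        first | exact (Colour.noConfusion h.2.2) | skip
      case center.center =>
        obtain ⟨hj, h2, -⟩ := h
        have e := add_cast_succ_inj (i := i) (a := r + 2) (b := r + 2)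
          (by omega) (by omega) (by linear_combination h2 - hj)
        omega
      case center.legA aw =>
        obtain ⟨hj, h2, -⟩ := h
        have := aw.isLt
        have e := add_cast_succ_inj (i := i) (a := r + 1 - (aw : ℕ)) (b := r + 2)
          (by omega) (by omega) (by linear_combination h2 - hj)
        omega
      case legA.center av =>
        obtain ⟨hj, h2, -⟩ := h
        have := av.isLt
        have e := add_cast_succ_inj (i := i) (a := r + 2) (b := r + 1 - (av : ℕ))
          (by omega) (by omega) (by linear_combination h2 - hj)
        exact Or.inl ⟨hj, Or.inr (Or.inl ⟨av, by omega, rfl, rfl⟩)⟩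
      case legA.legA av aw =>
        obtain ⟨hj, h2, -⟩ := h
        have := av.isLt; have := aw.isLt
        have e := add_cast_succ_inj (i := i) (a := r + 1 - (aw : ℕ))
          (b := r + 1 - (av : ℕ)) (by omega) (by omega)
          (by linear_combination h2 - hj)
        exact Or.inl ⟨hj, Or.inl ⟨av, aw, by omega, rfl, rfl⟩⟩
      case legB.legB bv bw =>
        obtain ⟨hj, h2, -⟩ := h
        have := bv.isLt; have := bw.isLt
        have e := add_cast_succ_inj (i := i) (a := r + 3 + (bw : ℕ))
          (b := r + 3 + (bv : ℕ)) (by omega) (by omega)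
          (by linear_combination h2 - hj)
        exact Or.inl ⟨hj, Or.inr (Or.inr (Or.inr (Or.inl
          ⟨bv, bw, by omega, rfl, rfl⟩)))⟩
      case legC.legC cv cw =>
        obtain ⟨h2, hj, -⟩ := h
        have := cv.isLt; have := cw.isLt
        have e := add_cast_succ_inj (i := i) (a := r + 3 + (cv : ℕ))
          (b := r + 3 + (cw : ℕ)) (by omega) (by omega)
          (by linear_combination hj - h2)
        exact Or.inr ⟨hj, Or.inr (Or.inr (Or.inr (Or.inr (Or.inr
          ⟨cw, cv, by omega, rfl, rfl⟩))))⟩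
    -- Case 2 : b₀ = ⟨a.i + 1, a.j, a.c⟩
    · cases v <;> cases w <;> simp only [emb, Diag.mk.injEq] at h <;>
        first | exact (Colour.noConfusion h.2.2) | skip
      case center.center =>
        obtain ⟨hj, h2, -⟩ := h
        have e := add_cast_succ_inj (i := i) (a := r + 2) (b := r + 2)
          (by omega) (by omega) (by linear_combination hj - h2)
        omega
      case center.legA aw =>
        obtain ⟨hj, h2, -⟩ := h
        have := aw.isLt
        have e := add_cast_succ_inj (i := i) (a := r + 2) (b := r + 1 - (aw : ℕ))
          (by omega) (by omega) (by linear_combination hj - h2)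
        exact Or.inr ⟨hj, Or.inr (Or.inl ⟨aw, by omega, rfl, rfl⟩)⟩
      case legA.center av =>
        obtain ⟨hj, h2, -⟩ := h
        have := av.isLt
        have e := add_cast_succ_inj (i := i) (a := r + 1 - (av : ℕ)) (b := r + 2)
          (by omega) (by omega) (by linear_combination hj - h2)
        omega
      case legA.legA av aw =>
        obtain ⟨hj, h2, -⟩ := h
        have := av.isLt; have := aw.isLt
        have e := add_cast_succ_inj (i := i) (a := r + 1 - (av : ℕ))
          (b := r + 1 - (aw : ℕ)) (by omega) (by omega)
          (by linear_combination hj - h2)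
        exact Or.inr ⟨hj, Or.inl ⟨aw, av, by omega, rfl, rfl⟩⟩
      case legB.legB bv bw =>
        obtain ⟨hj, h2, -⟩ := h
        have := bv.isLt; have := bw.isLt
        have e := add_cast_succ_inj (i := i) (a := r + 3 + (bv : ℕ))
          (b := r + 3 + (bw : ℕ)) (by omega) (by omega)
          (by linear_combination hj - h2)
        exact Or.inr ⟨hj, Or.inr (Or.inr (Or.inr (Or.inl
          ⟨bw, bv, by omega, rfl, rfl⟩)))⟩
      case legC.legC cv cw =>
        obtain ⟨h2, hj, -⟩ := h
        have := cv.isLt; have := cw.isLt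
        have e := add_cast_succ_inj (i := i) (a := r + 3 + (cw : ℕ))
          (b := r + 3 + (cv : ℕ)) (by omega) (by omega)
          (by linear_combination h2 - hj)
        exact Or.inl ⟨hj, Or.inr (Or.inr (Or.inr (Or.inr (Or.inr
          ⟨cv, cw, by omega, rfl, rfl⟩))))⟩
    -- Case 3 : a = ⟨k, k + (r+2), P⟩, b₀ = red/blue seam target
    · cases v <;> simp only [emb, Diag.mk.injEq] at ha <;>
        first | exact (Colour.noConfusion ha.2.2) | skip
      case legA av =>
        obtain ⟨h1, h2, -⟩ := ha
        have := av.isLt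
        have e := add_cast_inj (i := i) (a := r + 1 - (av : ℕ)) (b := r + 2)
          (by omega) (by omega) (by linear_combination h2 - h1 - hc2)
        omega
      case center =>
        obtain ⟨h1, -, -⟩ := ha
        rcases hb0 with hb0 | hb0
        · cases w <;> simp only [emb, Diag.mk.injEq] at hb0 <;>
            first | exact (Colour.noConfusion hb0.2.2) | skip
          case legB bw =>
            obtain ⟨hj, h2, -⟩ := hb0
            have := bw.isLt
            have e := add_cast_inj (i := (k : ZMod m)) (a := r + 3 + (bw : ℕ))
              (b := r + 3) (by omega) (by omega)
              (by linear_combination h2 - hj - hc3)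
            exact Or.inl ⟨by rw [hj, ← h1],
              Or.inr (Or.inr (Or.inl ⟨bw, by omega, rfl, rfl⟩))⟩
        · cases w <;> simp only [emb, Diag.mk.injEq] at hb0 <;>
            first | exact (Colour.noConfusion hb0.2.2) | skip
          case legC cw =>
            obtain ⟨h2, hj, -⟩ := hb0
            have := cw.isLt
            have e := add_cast_inj (i := (k : ZMod m)) (a := r + 3 + (cw : ℕ))
              (b := r + 3) (by omega) (by omega)
              (by linear_combination h2 - hj - hc3)
            exact Or.inl ⟨by rw [hj, ← h1],
              Or.inr (Or.inr (Or.inr (Or.inr (Or.inl ⟨cw, by omega, rfl, rfl⟩))))⟩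
    -- Case 4 : a = red/blue seam source, b₀ = ⟨k+1, k+(r+3), P⟩
    · rcases ha with ha | ha
      · cases v <;> simp only [emb, Diag.mk.injEq] at ha <;>
          first | exact (Colour.noConfusion ha.2.2) | skip
        case legB bv =>
          obtain ⟨h1, h2, -⟩ := ha
          have := bv.isLt
          have e := add_cast_inj (i := i) (a := r + 3 + (bv : ℕ)) (b := r + 3)
            (by omega) (by omega) (by linear_combination h2 - h1 - hc3)
          cases w <;> simp only [emb, Diag.mk.injEq] at hb0 <;>
            first | exact (Colour.noConfusion hb0.2.2) | skip
          case center =>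
            obtain ⟨hj, -, -⟩ := hb0
            exact Or.inr ⟨by rw [hj, ← h1],
              Or.inr (Or.inr (Or.inl ⟨bv, by omega, rfl, rfl⟩))⟩
          case legA aw =>
            obtain ⟨hj, h2w, -⟩ := hb0
            have := aw.isLt
            have e2 := add_cast_inj (i := (k : ZMod m)) (a := r + 1 - (aw : ℕ))
              (b := r + 2) (by omega) (by omega)
              (by linear_combination h2w - hj - hc2)
            omega
      · cases v <;> simp only [emb, Diag.mk.injEq] at ha <;>
          first | exact (Colour.noConfusion ha.2.2) | skip
        case legC cv =>
          obtain ⟨h2, h1, -⟩ := ha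
          have := cv.isLt
          have e := add_cast_inj (i := i) (a := r + 3 + (cv : ℕ)) (b := r + 3)
            (by omega) (by omega) (by linear_combination h2 - h1 - hc3)
          cases w <;> simp only [emb, Diag.mk.injEq] at hb0 <;>
            first | exact (Colour.noConfusion hb0.2.2) | skip
          case center =>
            obtain ⟨hj, -, -⟩ := hb0
            exact Or.inr ⟨by rw [hj, ← h1],
              Or.inr (Or.inr (Or.inr (Or.inr (Or.inl ⟨cv, by omega, rfl, rfl⟩))))⟩
          case legA aw =>
            obtain ⟨hj, h2w, -⟩ := hb0
            have := aw.isLt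
            have e2 := add_cast_inj (i := (k : ZMod m)) (a := r + 1 - (aw : ℕ))
              (b := r + 2) (by omega) (by omega)
              (by linear_combination h2w - hj - hc2)
            omega
  · rintro (⟨hj, hA⟩ | ⟨hj, hA⟩) <;> rw [hj]
    -- in-slice arrows
    · rcases hA with ⟨k, l, hkl, rfl, rfl⟩ | ⟨k, hk, rfl, rfl⟩ | ⟨k, hk, rfl, rfl⟩ |
        ⟨k, l, hkl, rfl, rfl⟩ | ⟨k, hk, rfl, rfl⟩ | ⟨k, l, hkl, rfl, rfl⟩
      · -- legA k → legA l
        left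
        have := k.isLt; have := l.isLt
        simp only [emb, Diag.mk.injEq]
        refine ⟨by trivial, ?_, by trivial⟩
        rw [show r + 1 - (l : ℕ) = (r + 1 - (k : ℕ)) + 1 from by omega]
        push_cast
        ring
      · -- legA 0 → center
        left
        have := k.isLt
        simp only [emb, Diag.mk.injEq]
        refine ⟨by trivial, ?_, by trivial⟩
        rw [show r + 2 = (r + 1 - (k : ℕ)) + 1 from by omega]
        push_cast
        ring
      · -- center → legB 0
        refine Or.inr (Or.inr (Or.inl ⟨i, ?_, Or.inl ?_⟩)) <;>
          simp only [emb, Diag.mk.injEq]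
        · refine ⟨by trivial, ?_, by trivial⟩
          push_cast
          ring
        · refine ⟨by trivial, ?_, by trivial⟩
          rw [show r + 3 + (k : ℕ) = r + 3 from by omega]
          push_cast
          ring
      · -- legB k → legB l
        left
        simp only [emb, Diag.mk.injEq]
        refine ⟨by trivial, ?_, by trivial⟩
        rw [show r + 3 + (l : ℕ) = (r + 3 + (k : ℕ)) + 1 from by omega]
        push_cast
        ring
      · -- center → legC 0
        refine Or.inr (Or.inr (Or.inl ⟨i, ?_, Or.inr ?_⟩)) <;>
          simp only [emb, Diag.mk.injEq]
        · refine ⟨by trivial, ?_, by trivial⟩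
          push_cast
          ring
        · refine ⟨?_, by trivial, by trivial⟩
          rw [show r + 3 + (k : ℕ) = r + 3 from by omega]
          push_cast
          ring
      · -- legC k → legC l
        refine Or.inr (Or.inl ?_)
        simp only [emb, Diag.mk.injEq]
        refine ⟨?_, by trivial, by trivial⟩
        rw [show r + 3 + (l : ℕ) = (r + 3 + (k : ℕ)) + 1 from by omega]
        push_cast
        ring
    -- cross-slice arrows (note `TArrow w v`)
    · rcases hA with ⟨k, l, hkl, rfl, rfl⟩ | ⟨k, hk, rfl, rfl⟩ | ⟨k, hk, rfl, rfl⟩ |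
        ⟨k, l, hkl, rfl, rfl⟩ | ⟨k, hk, rfl, rfl⟩ | ⟨k, l, hkl, rfl, rfl⟩
      · -- w = legA k, v = legA l with l + 1 = k
        refine Or.inr (Or.inl ?_)
        have := k.isLt; have := l.isLt
        simp only [emb, Diag.mk.injEq]
        refine ⟨by trivial, ?_, by trivial⟩
        rw [show r + 1 - (l : ℕ) = (r + 1 - (k : ℕ)) + 1 from by omega]
        push_cast
        ring
      · -- w = legA 0, v = center
        refine Or.inr (Or.inl ?_)
        have := k.isLt
        simp only [emb, Diag.mk.injEq]
        refine ⟨by trivial, ?_, by trivial⟩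
        rw [show r + 2 = (r + 1 - (k : ℕ)) + 1 from by omega]
        push_cast
        ring
      · -- w = center, v = legB 0
        refine Or.inr (Or.inr (Or.inr ⟨i, Or.inl ?_, ?_⟩)) <;>
          simp only [emb, Diag.mk.injEq]
        · refine ⟨by trivial, ?_, by trivial⟩
          rw [show r + 3 + (k : ℕ) = r + 3 from by omega]
          push_cast
          ring
        · refine ⟨by trivial, ?_, by trivial⟩
          push_cast
          ring
      · -- w = legB k, v = legB l with k + 1 = l
        refine Or.inr (Or.inl ?_)
        simp only [emb, Diag.mk.injEq]
        refine ⟨by trivial, ?_, by trivial⟩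
        rw [show r + 3 + (l : ℕ) = (r + 3 + (k : ℕ)) + 1 from by omega]
        push_cast
        ring
      · -- w = center, v = legC 0
        refine Or.inr (Or.inr (Or.inr ⟨i, Or.inr ?_, ?_⟩)) <;>
          simp only [emb, Diag.mk.injEq]
        · refine ⟨?_, by trivial, by trivial⟩
          rw [show r + 3 + (k : ℕ) = r + 3 from by omega]
          push_cast
          ring
        · refine ⟨by trivial, ?_, by trivial⟩
          push_cast
          ring
      · -- w = legC k, v = legC l with k + 1 = l
        left
        simp only [emb, Diag.mk.injEq]
        refine ⟨?_, by trivial, by trivial⟩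
        rw [show r + 3 + (l : ℕ) = (r + 3 + (k : ℕ)) + 1 from by omega]
        push_cast
        ring

lemma rho_invol (d : Diag m) : rho (rho d) = d := by
  obtain ⟨i, j, c⟩ := d
  cases c <;> rfl

lemma mem_tauD_image_iff (hm : r + t + 3 < m) {a : Diag m} :
    a ∈ (tauD r t t) '' (PiSetAt r t t (1 : ZMod m)) ↔
      a ∈ PiSetAt r t t (0 : ZMod m) := by
  constructor
  · rintro ⟨d, hd, rfl⟩
    obtain ⟨v, rfl⟩ := mem_PiSetAt_iff.1 hd
    rw [tauD_emb hm, if_pos rfl, sub_self]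
    exact emb_mem _ _
  · intro h
    obtain ⟨v, rfl⟩ := mem_PiSetAt_iff.1 h
    refine ⟨emb r t 1 (((treeRhoPerm r t)⁻¹ ^ m) v), emb_mem _ _, ?_⟩
    rw [tauD_emb hm, if_pos rfl, sub_self]
    congr 1
    rw [← Equiv.Perm.mul_apply, inv_pow, mul_inv_cancel, Equiv.Perm.one_apply]

lemma seamTwist_emb_iff (hm : r + t + 3 < m) {i j : ZMod m}
    {v w : TVert r t t} :
    SeamTwist r t t m (emb r t i v) (emb r t j w) ↔
      Odd m ∧ i = 0 ∧ j = 1 := by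
  constructor
  · rintro ⟨-, hodd, hmem, hb⟩
    exact ⟨hodd, (emb_mem_PiSetAt_iff hm).1 ((mem_tauD_image_iff hm).1 hmem),
      (emb_mem_PiSetAt_iff hm).1 hb⟩
  · rintro ⟨hodd, hi, hj⟩
    exact ⟨rfl, hodd, (mem_tauD_image_iff hm).2 ((emb_mem_PiSetAt_iff hm).2 hi),
      (emb_mem_PiSetAt_iff hm).2 hj⟩

lemma zero_ne_one' (hm : r + t + 3 < m) : (0 : ZMod m) ≠ (1 : ZMod m) := by
  intro h
  have h' : ((0 : ℕ) : ZMod m) = ((1 : ℕ) : ZMod m) := by exact_mod_cast h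
  have := cast_inj_of_lt (m := m) (by omega) (by omega) h'
  omega

lemma arrowD_emb_iff (hm : r + t + 3 < m) {i j : ZMod m} {v w : TVert r t t} :
    ArrowD r t t m (emb r t i v) (emb r t j w) ↔
      (¬ (Odd m ∧ i = 0 ∧ j = 1) ∧
        ((j = i ∧ TArrow v w) ∨ (j = i + 1 ∧ TArrow w v))) ∨
      ((Odd m ∧ i = 0 ∧ j = 1) ∧ TArrow (treeRho w) v) := by
  constructor
  · rintro ⟨-, -, b₀, hrot, (⟨hst, hb⟩ | ⟨hst, hb⟩)⟩
    · -- seam case : b = rho b₀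
      have hb0 : b₀ = emb r t j (treeRho w) := by
        rw [← rho_emb, hb, rho_invol]
      subst hb0
      obtain ⟨hodd, hi, hj⟩ := (seamTwist_emb_iff hm).1 hst
      rcases (rot_emb_iff hm).1 hrot with ⟨hji, -⟩ | ⟨-, hT⟩
      · exact absurd (hi ▸ hj ▸ hji).symm (zero_ne_one' hm)
      · exact Or.inr ⟨⟨hodd, hi, hj⟩, hT⟩
    · subst hb
      exact Or.inl ⟨fun hcond => hst ((seamTwist_emb_iff hm).2 hcond),
        (rot_emb_iff hm).1 hrot⟩
  · rintro (⟨hns, hd⟩ | ⟨⟨hodd, hi, hj⟩, hT⟩)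
    · exact ⟨emb_mem_PiSet _ _, emb_mem_PiSet _ _, emb r t j w,
        (rot_emb_iff hm).2 hd,
        Or.inr ⟨fun hst => hns ((seamTwist_emb_iff hm).1 hst), rfl⟩⟩
    · refine ⟨emb_mem_PiSet _ _, emb_mem_PiSet _ _, emb r t j (treeRho w),
        (rot_emb_iff hm).2 (Or.inr ⟨by rw [hi, hj, zero_add], hT⟩),
        Or.inl ⟨(seamTwist_emb_iff hm).2 ⟨hodd, hi, hj⟩, ?_⟩⟩
      rw [rho_emb, treeRho_invol]

lemma ee_succ_of_dvd (hm0 : 0 < m) {z : ℤ} (h : (m : ℤ) ∣ z) :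
    ee m (z + 1) = ee m z - 1 := by
  have := ee_pred_of_dvd (m := m) hm0 (z := z + 1) (by simpa using h)
  simp only [add_sub_cancel_right] at this
  omega

lemma ee_succ_of_not_dvd (hm0 : 0 < m) {z : ℤ} (h : ¬ (m : ℤ) ∣ z) :
    ee m (z + 1) = ee m z := by
  have := ee_pred_of_not_dvd (m := m) hm0 (z := z + 1) (by simpa using h)
  simp only [add_sub_cancel_right] at this
  omega

lemma phi_arrow (hm : r + t + 3 < m) (x y : ℤ × TVert r t t) :
    ArrowD r t t m (phiMap r t m x) (phiMap r t m y) ↔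
      ∃ y', (∃ k : ℤ, ((shiftPerm m ((treeRhoPerm r t) ^ m)) ^ k) y = y') ∧
        ZArrow TArrow x y' := by
  obtain ⟨z, v⟩ := x
  obtain ⟨z', w⟩ := y
  have hm0 : 0 < m := by omega
  set g := treeRhoPerm r t with hg
  have gz : ∀ (a b : ℤ) (u : TVert r t t), (g ^ a) ((g ^ b) u) = (g ^ (a + b)) u := by
    intro a b u
    rw [← Equiv.Perm.mul_apply, ← zpow_add]
  have gcongr : ∀ {a b : ℤ}, (2 : ℤ) ∣ a - b → ∀ u : TVert r t t,
      (g ^ a) u = (g ^ b) u := by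
    intro a b h u
    rw [g_zpow_congr h]
  have rho_g : ∀ (a : ℤ) (u : TVert r t t),
      treeRho ((g ^ a) u) = (g ^ (1 + a)) u := by
    intro a u
    rw [zpow_add, zpow_one, Equiv.Perm.mul_apply, treeRhoPerm_apply]
  have hz0 : ∀ z₀ : ℤ, ((z₀ : ZMod m) = 0) ↔ (m : ℤ) ∣ z₀ := fun z₀ =>
    ZMod.intCast_zmod_eq_zero_iff_dvd z₀ m
  have hcast1 : ((z + 1 : ℤ) : ZMod m) = ((z : ZMod m) + 1) := by push_cast; ring
  have horb : ∀ y' : ℤ × TVert r t t,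
      (∃ k : ℤ, ((shiftPerm m (g ^ m)) ^ k) (z', w) = y') ↔
        phiMap r t m (z', w) = phiMap r t m y' := fun y' =>
    (phi_fibre hm (z', w) y').symm
  constructor
  · intro h
    have h' := (arrowD_emb_iff hm
      (i := (z : ZMod m)) (j := ((z' : ZMod m)))
      (v := (g ^ ((m : ℤ) * ee m z)) v) (w := (g ^ ((m : ℤ) * ee m z')) w)).1 h
    rcases h' with ⟨hns, (⟨hji, hT⟩ | ⟨hji, hT⟩)⟩ | ⟨⟨hodd, hi, hj⟩, hT⟩
    · -- in-slice
      refine ⟨(z, (g ^ ((m : ℤ) * ee m z' - (m : ℤ) * ee m z)) w),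
        (horb _).2 ?_, Or.inl ⟨rfl, ?_⟩⟩
      · show emb r t ((z' : ZMod m)) _ = emb r t ((z : ZMod m)) _
        rw [hji, gz]
        congr 2
        ring
        rfl
      · refine (tArrow_zpow_iff ((m : ℤ) * ee m z)).1 ?_
        rw [gz, show (m : ℤ) * ee m z + ((m : ℤ) * ee m z' - (m : ℤ) * ee m z)
          = (m : ℤ) * ee m z' from by ring]
        exact hT
    · -- cross-slice, no seam
      refine ⟨(z + 1, (g ^ ((m : ℤ) * ee m z' - (m : ℤ) * ee m (z + 1))) w),
        (horb _).2 ?_, Or.inr ⟨rfl, ?_⟩⟩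
      · show emb r t ((z' : ZMod m)) _ = emb r t (((z + 1 : ℤ) : ZMod m)) _
        rw [hcast1, hji, gz]
        congr 2
        ring
        rfl
      · refine (tArrow_zpow_iff ((m : ℤ) * ee m z)).1 ?_
        rw [gz]
        by_cases hdvd : (m : ℤ) ∣ z
        · have hnotodd : ¬ Odd m := by
            intro hodd
            exact hns ⟨hodd, (hz0 z).2 hdvd, by rw [hji, (hz0 z).2 hdvd, zero_add]⟩
          have heven : Even m := Nat.not_odd_iff_even.1 hnotodd
          have hee : ee m (z + 1) = ee m z - 1 := ee_succ_of_dvd hm0 hdvd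
          rw [hee]
          have h2 : (2 : ℤ) ∣ ((m : ℤ) * ee m z + ((m : ℤ) * ee m z'
              - (m : ℤ) * (ee m z - 1)) - (m : ℤ) * ee m z') := by
            obtain ⟨c, hc⟩ := heven
            refine ⟨(c : ℤ), ?_⟩
            push_cast [hc]
            ring
          rw [gcongr h2]
          exact hT
        · have hee : ee m (z + 1) = ee m z := ee_succ_of_not_dvd hm0 hdvd
          rw [hee, show (m : ℤ) * ee m z + ((m : ℤ) * ee m z'
            - (m : ℤ) * ee m z) = (m : ℤ) * ee m z' from by ring]
          exact hT
    · -- cross-slice, seam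
      have hdvd : (m : ℤ) ∣ z := (hz0 z).1 hi
      have hee : ee m (z + 1) = ee m z - 1 := ee_succ_of_dvd hm0 hdvd
      refine ⟨(z + 1, (g ^ ((m : ℤ) * ee m z' - (m : ℤ) * ee m (z + 1))) w),
        (horb _).2 ?_, Or.inr ⟨rfl, ?_⟩⟩
      · show emb r t ((z' : ZMod m)) _ = emb r t (((z + 1 : ℤ) : ZMod m)) _
        rw [hcast1, hi, zero_add, hj, gz]
        congr 2
        ring
        rfl
      · refine (tArrow_zpow_iff ((m : ℤ) * ee m z)).1 ?_
        rw [gz, hee]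
        rw [rho_g] at hT
        have h2 : (2 : ℤ) ∣ ((m : ℤ) * ee m z + ((m : ℤ) * ee m z'
            - (m : ℤ) * (ee m z - 1)) - (1 + (m : ℤ) * ee m z')) := by
          obtain ⟨c, hc⟩ := hodd
          refine ⟨(c : ℤ), ?_⟩
          push_cast [hc]
          ring
        rw [gcongr h2]
        exact hT
  · rintro ⟨y', ⟨k, hk⟩, hz⟩
    have hfib : phiMap r t m (z', w) = phiMap r t m y' := (horb y').1 ⟨k, hk⟩
    rw [hfib]
    obtain ⟨z₁, u⟩ := y'
    rcases hz with ⟨h1, hT⟩ | ⟨h1, hT⟩ <;> simp only at h1 hT <;> rw [h1]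
    · -- in-slice
      refine (arrowD_emb_iff hm).2 (Or.inl ⟨?_, Or.inl ⟨rfl, ?_⟩⟩)
      · rintro ⟨-, hi0, hi1⟩
        exact (zero_ne_one' hm) (hi0 ▸ hi1)
      · exact (tArrow_zpow_iff ((m : ℤ) * ee m z)).2 hT
    · -- cross-slice
      show ArrowD r t t m (emb r t ((z : ZMod m)) _)
        (emb r t (((z + 1 : ℤ) : ZMod m)) _)
      rw [hcast1]
      by_cases hdvd : (m : ℤ) ∣ z
      · have hee : ee m (z + 1) = ee m z - 1 := ee_succ_of_dvd hm0 hdvd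
        by_cases hodd : Odd m
        · refine (arrowD_emb_iff hm).2 (Or.inr ⟨⟨hodd, (hz0 z).2 hdvd,
            by rw [(hz0 z).2 hdvd, zero_add]⟩, ?_⟩)
          rw [rho_g, hee]
          have h2 : (2 : ℤ) ∣ ((1 + (m : ℤ) * (ee m z - 1))
              - (m : ℤ) * ee m z) := by
            obtain ⟨c, hc⟩ := hodd
            refine ⟨-(c : ℤ), ?_⟩
            push_cast [hc]
            ring
          rw [gcongr h2]
          exact (tArrow_zpow_iff ((m : ℤ) * ee m z)).2 hT
        · refine (arrowD_emb_iff hm).2 (Or.inl ⟨fun hc => hodd hc.1,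
            Or.inr ⟨rfl, ?_⟩⟩)
          rw [hee]
          have heven : Even m := Nat.not_odd_iff_even.1 hodd
          have h2 : (2 : ℤ) ∣ ((m : ℤ) * (ee m z - 1) - (m : ℤ) * ee m z) := by
            obtain ⟨c, hc⟩ := heven
            refine ⟨-(c : ℤ), ?_⟩
            push_cast [hc]
            ring
          rw [gcongr h2]
          exact (tArrow_zpow_iff ((m : ℤ) * ee m z)).2 hT
      · have hee : ee m (z + 1) = ee m z := ee_succ_of_not_dvd hm0 hdvd
        refine (arrowD_emb_iff hm).2 (Or.inl ⟨?_, Or.inr ⟨rfl, ?_⟩⟩)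
        · rintro ⟨-, hi0, -⟩
          exact hdvd ((hz0 z).1 hi0)
        · rw [hee]
          exact (tArrow_zpow_iff ((m : ℤ) * ee m z)).2 hT

end GammaAux

/-- Theorem 4.2, symmetric case. Let `r, t` be nonnegative
integers and `n ≥ r+t+1`, and let `ρ` also denote the automorphism of
`ℤ T_{r,t,t}` induced by the order-two graph automorphism of `T_{r,t,t}`
exchanging its two legs of length `t`. Then there is an isomorphism of stable
translation quivers `Γ^{n+3}_{r,t,t} ≅ ℤ T_{r,t,t} / ⟨τ^{-(n+3)} ρ^{n+3}⟩`;
in particular the twist by `ρ` occurs exactly when the polygon has an odd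
number of sides. -/
theorem gamma_iso_ZT_quotient_symmetric (r t n : ℕ) (hn : r + t + 1 ≤ n) :
    (∃ φ : ℤ × TVert r t t → Diag (n + 3),
      IsQuotientIso r t t (n + 3) TArrow
        (shiftPerm (n + 3) ((treeRhoPerm r t) ^ (n + 3))) φ) ∧
    (Odd (n + 3) → (treeRhoPerm r t) ^ (n + 3) = treeRhoPerm r t) ∧
    (Even (n + 3) → (treeRhoPerm r t) ^ (n + 3) = 1) := by
  have hm : r + t + 3 < n + 3 := by omega
  have hg2 : (treeRhoPerm r t) ^ 2 = 1 := by rw [pow_two]; exact GammaAux.g_sq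
  refine ⟨⟨GammaAux.phiMap r t (n + 3), ?_, ?_, ?_, ?_, ?_⟩, ?_, ?_⟩
  · intro x
    exact GammaAux.emb_mem_PiSet _ _
  · exact GammaAux.phi_surj hm
  · exact GammaAux.phi_fibre hm
  · intro x
    exact GammaAux.phi_tau hm x
  · exact GammaAux.phi_arrow hm
  · rintro ⟨c, hc⟩
    rw [hc, pow_succ, pow_mul, hg2, one_pow, one_mul]
  · rintro ⟨c, hc⟩
    rw [hc, ← two_mul, pow_mul, hg2, one_pow]
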